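/- Let m be a positive integer and G a CDF on ℝ with finite mean. Then the Hoeffding transform preserves the mean and shrinks the L-scale by a factor (m−1)/m: ∫₀¹ (H_m(G))^{-1}(u) du = ∫₀¹ G^{-1}(u) du, and λ₂(H_m(G)) = ((m−1)/m) · λ₂(G), where λ₂(G) = ∫₀¹ G^{-1}(p)(2p−1) dp. Equivalently, MAD(H_m(G)) = ((m−1)/m) · MAD(G), with MAD(G) = 2λ₂(G). In particular, applied to the empirical CDF 𝔽_n of any sample, the empirical Hoeffding CDF 𝔽_{n,m} = H_m(𝔽_n) satisfies μ(𝔽_{n,m}) = μ(𝔽_n) and MAD(𝔽_{n,m}) = ((m−1)/m) MAD(𝔽_n). -/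

import Mathlib

open MeasureTheory Filter Set
open scoped BoundedContinuousFunction ProbabilityTheory

noncomputable section

/-- Density of the Beta(j, m-j+1) distribution. -/
def betaDens (m j : ℕ) (u : ℝ) : ℝ :=
  (m : ℝ) * ((m - 1).choose (j - 1) : ℝ) * u ^ (j - 1) * (1 - u) ^ (m - j)

/-- Quantile function (left-continuous generalized inverse). -/
def quantile (G : ℝ → ℝ) (p : ℝ) : ℝ :=
  sInf {x : ℝ | p ≤ G x}

/-- `G` is a cumulative distribution function on ℝ. -/
structure IsCDF (G : ℝ → ℝ) : Prop where
  mono : Monotone G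
  rightCont : ∀ x, ContinuousWithinAt G (Ici x) x
  tendsto_atBot : Tendsto G atBot (nhds 0)
  tendsto_atTop : Tendsto G atTop (nhds 1)

/-- `G` has finite mean: its quantile function is integrable on (0,1). -/
def HasFiniteMean (G : ℝ → ℝ) : Prop :=
  IntegrableOn (fun u => quantile G u) (Ioo (0:ℝ) 1)

/-- Expected j-th order statistic from a sample of size m drawn from G. -/
def muOS (m j : ℕ) (G : ℝ → ℝ) : ℝ :=
  ∫ u in Ioo (0:ℝ) 1, quantile G u * betaDens m j u

/-- The Hoeffding CDF operator `H_m`. -/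
def hoeffCDF (m : ℕ) (G : ℝ → ℝ) (x : ℝ) : ℝ :=
  (m : ℝ)⁻¹ * ∑ j ∈ Finset.Icc 1 m, if muOS m j G ≤ x then (1:ℝ) else 0

/-- The quantile-Hoeffding operator `I_m`. -/
def quantHoeff (m : ℕ) (h : ℝ → ℝ) (u : ℝ) : ℝ :=
  ∑ j ∈ Finset.Icc 1 m,
    (∫ t in Ioo (0:ℝ) 1, h t * betaDens m j t) *
      (if u ∈ Ioc (((j : ℝ) - 1) / m) ((j : ℝ) / m) then (1:ℝ) else 0)

/-- Empirical CDF of the reals `x 0, ..., x (n-1)`. -/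
def ecdf (n : ℕ) (x : ℕ → ℝ) (t : ℝ) : ℝ :=
  (n : ℝ)⁻¹ * ∑ i ∈ Finset.range n, if x i ≤ t then (1:ℝ) else 0

/-- Empirical CDF of the random sample `X 0, ..., X (n-1)`. -/
def empCDF {Ω : Type*} (X : ℕ → Ω → ℝ) (n : ℕ) (ω : Ω) : ℝ → ℝ :=
  fun t => (n : ℝ)⁻¹ * ∑ i ∈ Finset.range n, if X i ω ≤ t then (1:ℝ) else 0

/-- The L-scale (second L-moment) `λ₂`. -/
def lambda2 (G : ℝ → ℝ) : ℝ :=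
  ∫ p in Ioo (0:ℝ) 1, quantile G p * (2 * p - 1)



lemma binom_sum (n : ℕ) (u : ℝ) :
    ∑ i ∈ Finset.range (n+1), (n.choose i : ℝ) * u ^ i * (1-u) ^ (n-i) = 1 := by
  have h := add_pow u (1-u) n
  simp only [add_sub_cancel, one_pow] at h
  refine Eq.trans (Finset.sum_congr rfl fun i _ => by ring) h.symm

lemma binom_mean (n : ℕ) (u : ℝ) :
    ∑ i ∈ Finset.range (n+1), (i : ℝ) * (n.choose i : ℝ) * u ^ i * (1-u) ^ (n-i)
      = n * u := by
  cases n with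
  | zero => simp
  | succ d =>
    rw [Finset.sum_range_succ']
    simp only [Nat.cast_zero, zero_mul, Nat.choose_zero_right, add_zero]
    have key : ∀ i ∈ Finset.range (d+1),
        ((i+1 : ℕ) : ℝ) * ((d+1).choose (i+1) : ℝ) * u ^ (i+1) * (1-u) ^ (d+1-(i+1))
        = ((d:ℝ)+1) * u * ((d.choose i : ℝ) * u ^ i * (1-u) ^ (d-i)) := by
      intro i _
      have h : (d+1) * d.choose i = (d+1).choose (i+1) * (i+1) := Nat.add_one_mul_choose_eq d i
      have h' : ((d:ℝ)+1) * (d.choose i : ℝ) = ((d+1).choose (i+1) : ℝ) * ((i:ℝ)+1) := by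
        exact_mod_cast congrArg (Nat.cast : ℕ → ℝ) h
      have he : d+1-(i+1) = d - i := by omega
      rw [he, pow_succ]
      push_cast
      linear_combination (-u) * u ^ i * (1-u) ^ (d-i) * h'
    calc ∑ i ∈ Finset.range (d+1),
            ((i+1 : ℕ) : ℝ) * ((d+1).choose (i+1) : ℝ) * u ^ (i+1) * (1-u) ^ (d+1-(i+1))
        = ∑ i ∈ Finset.range (d+1), ((d:ℝ)+1) * u * ((d.choose i : ℝ) * u ^ i * (1-u) ^ (d-i)) :=
          Finset.sum_congr rfl key
      _ = ((d:ℝ)+1) * u * ∑ i ∈ Finset.range (d+1), (d.choose i : ℝ) * u ^ i * (1-u) ^ (d-i) := by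
          rw [Finset.mul_sum]
      _ = (↑(d+1) : ℝ) * u := by rw [binom_sum]; push_cast; ring

lemma sum_Icc_one (m : ℕ) (f : ℕ → ℝ) :
    ∑ j ∈ Finset.Icc 1 m, f j = ∑ i ∈ Finset.range m, f (1+i) := by
  rw [← Finset.Ico_add_one_right_eq_Icc, Finset.sum_Ico_eq_sum_range]
  simp

lemma sum_betaDens (m : ℕ) (hm : 0 < m) (u : ℝ) :
    ∑ j ∈ Finset.Icc 1 m, betaDens m j u = m := by
  rw [sum_Icc_one]
  have h : ∀ i, betaDens m (1+i) u
      = (m:ℝ) * (((m-1).choose i : ℝ) * u ^ i * (1-u) ^ (m-1-i)) := by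
    intro i
    unfold betaDens
    have h1 : 1 + i - 1 = i := by omega
    have h2 : m - (1+i) = m-1-i := by omega
    rw [h1, h2]; ring
  calc ∑ i ∈ Finset.range m, betaDens m (1+i) u
      = ∑ i ∈ Finset.range m, (m:ℝ) * (((m-1).choose i : ℝ) * u ^ i * (1-u) ^ (m-1-i)) :=
        Finset.sum_congr rfl fun i _ => h i
    _ = (m:ℝ) * ∑ i ∈ Finset.range ((m-1)+1), ((m-1).choose i : ℝ) * u ^ i * (1-u) ^ (m-1-i) := by
        rw [← Finset.mul_sum, show Finset.range m = Finset.range ((m-1)+1) from by congr 1; omega]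
    _ = m := by rw [binom_sum]; ring

lemma sum_weighted_betaDens (m : ℕ) (hm : 0 < m) (u : ℝ) :
    ∑ j ∈ Finset.Icc 1 m, (2*(j:ℝ) - 1 - m) * betaDens m j u
      = (m:ℝ) * ((m:ℝ)-1) * (2*u - 1) := by
  rw [sum_Icc_one]
  have h : ∀ i, (2*((1+i:ℕ):ℝ) - 1 - m) * betaDens m (1+i) u
      = (m:ℝ) * (2 * ((i:ℝ) * ((m-1).choose i : ℝ) * u ^ i * (1-u) ^ (m-1-i))
          + (1 - (m:ℝ)) * (((m-1).choose i : ℝ) * u ^ i * (1-u) ^ (m-1-i))) := by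
    intro i
    unfold betaDens
    have h1 : 1 + i - 1 = i := by omega
    have h2 : m - (1+i) = m-1-i := by omega
    rw [h1, h2]; push_cast; ring
  rw [Finset.sum_congr rfl fun i _ => h i, ← Finset.mul_sum]
  rw [show Finset.range m = Finset.range ((m-1)+1) by congr 1; omega]
  rw [Finset.sum_add_distrib, ← Finset.mul_sum, ← Finset.mul_sum, binom_mean, binom_sum]
  have hc : ((m-1 : ℕ) : ℝ) = (m:ℝ) - 1 := by
    have : (1:ℕ) ≤ m := hm
    push_cast [Nat.cast_sub this]
    ring
  rw [hc]; ring



lemma bddBelow_levelset {G : ℝ → ℝ} (hG : IsCDF G) {p : ℝ} (hp : 0 < p) :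
    BddBelow {x | p ≤ G x} := by
  have : ∀ᶠ x in atBot, G x < p := hG.tendsto_atBot.eventually_lt_const hp
  rw [eventually_atBot] at this
  obtain ⟨x₀, hx₀⟩ := this
  refine ⟨x₀, fun y hy => ?_⟩
  by_contra hlt
  push_neg at hlt
  exact absurd hy (not_le.2 (hx₀ y hlt.le))

lemma nonempty_levelset {G : ℝ → ℝ} (hG : IsCDF G) {p : ℝ} (hp : p < 1) :
    {x | p ≤ G x}.Nonempty := by
  have : ∀ᶠ x in atTop, p < G x := hG.tendsto_atTop.eventually_const_lt hp
  obtain ⟨x₀, hx₀⟩ := this.exists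
  exact ⟨x₀, le_of_lt hx₀⟩

lemma quantile_mono {G : ℝ → ℝ} (hG : IsCDF G) {p q : ℝ} (hp : 0 < p) (hpq : p ≤ q)
    (hq : q < 1) : quantile G p ≤ quantile G q :=
  csInf_le_csInf (bddBelow_levelset hG hp) (nonempty_levelset hG hq)
    (fun x hx => le_trans hpq hx)

lemma integrableOn_mul_bdd {G : ℝ → ℝ} (hGm : HasFiniteMean G) (f : ℝ → ℝ)
    (hf : Continuous f) (C : ℝ) (hC : ∀ u ∈ Ioo (0:ℝ) 1, |f u| ≤ C) :
    IntegrableOn (fun u => quantile G u * f u) (Ioo (0:ℝ) 1) := by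
  have hb : ∀ᵐ u ∂(volume.restrict (Ioo (0:ℝ) 1)), ‖f u‖ ≤ C :=
    (ae_restrict_iff' measurableSet_Ioo).2 (ae_of_all _ fun u hu => by
      simpa [Real.norm_eq_abs] using hC u hu)
  have h := Integrable.bdd_mul (c := C) hGm (hf.aestronglyMeasurable.restrict) hb
  exact h.congr (ae_of_all _ fun x => mul_comm _ _)

lemma abs_betaDens_le (m j : ℕ) {u : ℝ} (hu : u ∈ Ioo (0:ℝ) 1) :
    |betaDens m j u| ≤ (m:ℝ) * ((m-1).choose (j-1) : ℝ) := by
  obtain ⟨h0, h1⟩ := hu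
  have hc : (0:ℝ) ≤ (m:ℝ) * ((m-1).choose (j-1) : ℝ) := by positivity
  unfold betaDens
  rw [abs_mul, abs_mul, abs_pow, abs_pow, abs_of_nonneg hc]
  have p1 : |u| ^ (j-1) ≤ 1 := pow_le_one₀ (abs_nonneg _) (by rw [abs_le]; constructor <;> linarith)
  have p2 : |1-u| ^ (m-j) ≤ 1 := pow_le_one₀ (abs_nonneg _) (by rw [abs_le]; constructor <;> linarith)
  have h5 : (m:ℝ) * ((m-1).choose (j-1) : ℝ) * |u| ^ (j-1) * |1-u| ^ (m-j)
      ≤ ((m:ℝ) * ((m-1).choose (j-1) : ℝ) * 1) * 1 :=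
    mul_le_mul (mul_le_mul_of_nonneg_left p1 hc) p2 (pow_nonneg (abs_nonneg _) _) (by positivity)
  linarith

lemma continuous_betaDens (m j : ℕ) : Continuous (betaDens m j) := by
  unfold betaDens; fun_prop

lemma integrableOn_quantile_betaDens {G : ℝ → ℝ} (hGm : HasFiniteMean G) (m j : ℕ) :
    IntegrableOn (fun u => quantile G u * betaDens m j u) (Ioo (0:ℝ) 1) :=
  integrableOn_mul_bdd hGm _ (continuous_betaDens m j) _ (fun u hu => abs_betaDens_le m j hu)

def phiOS (m j : ℕ) (u : ℝ) : ℝ := (m.choose j : ℝ) * (u ^ j * (1-u) ^ (m-j))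

lemma choose_id1 (m j : ℕ) (hj1 : 1 ≤ j) (hjm : j ≤ m) :
    j * m.choose j = m * (m-1).choose (j-1) := by
  have h := Nat.add_one_mul_choose_eq (m-1) (j-1)
  rw [show m-1+1 = m by omega, show j-1+1 = j by omega] at h
  rw [h]; exact Nat.mul_comm _ _
  
lemma choose_id2 (m j : ℕ) (hj1 : 1 ≤ j) (hjm : j < m) :
    (m - j) * m.choose j = m * (m-1).choose j := by
  have h := choose_id1 m (m-j) (by omega) (by omega)
  rw [Nat.choose_symm (by omega : j ≤ m)] at h
  rw [show (m-1).choose j = (m-1).choose (m-j-1) from by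
    rw [← Nat.choose_symm (by omega : j ≤ m-1)]; congr 1; omega]
  exact h

lemma choose_id1R (m j : ℕ) (hj1 : 1 ≤ j) (hjm : j ≤ m) :
    (j : ℝ) * (m.choose j : ℝ) = (m : ℝ) * ((m-1).choose (j-1) : ℝ) := by
  exact_mod_cast congrArg (Nat.cast : ℕ → ℝ) (choose_id1 m j hj1 hjm)

lemma choose_id2R (m j : ℕ) (hj1 : 1 ≤ j) (hjm : j < m) :
    ((m:ℝ) - j) * (m.choose j : ℝ) = (m : ℝ) * ((m-1).choose j : ℝ) := by
  have := congrArg (Nat.cast : ℕ → ℝ) (choose_id2 m j hj1 hjm)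
  push_cast [Nat.cast_sub (le_of_lt hjm)] at this
  linarith [this]

lemma betaDens_succ (m j : ℕ) (u : ℝ) :
    betaDens m (j+1) u = (m : ℝ) * ((m-1).choose j : ℝ) * u ^ j * (1-u) ^ (m-j-1) := by
  unfold betaDens
  rw [show j+1-1 = j from rfl, show m-(j+1) = m-j-1 by omega]

lemma betaDens_diff_eq (m j : ℕ) (hj1 : 1 ≤ j) (hjm : j < m) (u : ℝ) :
    betaDens m (j+1) u - betaDens m j u
      = (m.choose j : ℝ) * u ^ (j-1) * (1-u) ^ (m-j-1) * ((m:ℝ)*u - j) := by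
  rw [betaDens_succ]
  unfold betaDens
  have hu : u ^ j = u ^ (j-1) * u := by rw [← pow_succ]; congr 1; omega
  have hv : (1-u) ^ (m-j) = (1-u) ^ (m-j-1) * (1-u) := by rw [← pow_succ]; congr 1; omega
  rw [hu, hv]
  linear_combination (-(u ^ (j-1) * (1-u) ^ (m-j-1) * u)) * choose_id2R m j hj1 hjm
    + (u ^ (j-1) * (1-u) ^ (m-j-1) * (1-u)) * choose_id1R m j hj1 (le_of_lt hjm)

lemma hasDerivAt_phiOS (m j : ℕ) (hj1 : 1 ≤ j) (hjm : j < m) (u : ℝ) :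
    HasDerivAt (phiOS m j) (betaDens m j u - betaDens m (j+1) u) u := by
  have hd : HasDerivAt (fun u : ℝ => 1 - u) (-1) u := by
    simpa using (hasDerivAt_id u).const_sub (1:ℝ)
  have h2 : HasDerivAt (fun u : ℝ => (1-u) ^ (m-j))
      (((m-j : ℕ) : ℝ) * (1-u) ^ (m-j-1) * (-1)) u := by
    exact ((hasDerivAt_pow (m-j) (1-u)).comp u hd).congr_deriv (by ring)
  have h1 : HasDerivAt (fun u : ℝ => u ^ j) ((j:ℝ) * u ^ (j-1)) u := hasDerivAt_pow j u
  have h := ((h1.mul h2).const_mul ((m.choose j : ℕ) : ℝ))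
  refine h.congr_deriv (Eq.symm ?_)
  rw [betaDens_succ]
  unfold betaDens
  push_cast [Nat.cast_sub (le_of_lt hjm)]
  linear_combination (-((1-u) ^ (m-j) * u ^ (j-1))) * choose_id1R m j hj1 (le_of_lt hjm)
    + (u ^ j * (1-u) ^ (m-j-1)) * choose_id2R m j hj1 hjm

lemma integrableOn_betaDens (m j : ℕ) : IntegrableOn (betaDens m j) (Ioo (0:ℝ) 1) := by
  have : Continuous (betaDens m j) := by unfold betaDens; fun_prop
  exact (this.integrableOn_Icc (a := 0) (b := 1)).mono_set Ioo_subset_Icc_self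

lemma integral_betaDens_diff (m j : ℕ) (hj1 : 1 ≤ j) (hjm : j < m) :
    ∫ u in Ioo (0:ℝ) 1, (betaDens m (j+1) u - betaDens m j u) = 0 := by
  have hcont : Continuous (fun u => betaDens m j u - betaDens m (j+1) u) := by
    unfold betaDens; fun_prop
  have hftc := intervalIntegral.integral_eq_sub_of_hasDerivAt
    (f := phiOS m j) (a := (0:ℝ)) (b := 1)
    (fun u _ => hasDerivAt_phiOS m j hj1 hjm u)
    (hcont.intervalIntegrable 0 1)
  have h0 : phiOS m j 0 = 0 := by
    simp [phiOS, zero_pow (show j ≠ 0 by omega)]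
  have h1 : phiOS m j 1 = 0 := by
    simp [phiOS, zero_pow (show m - j ≠ 0 by omega)]
  rw [h0, h1] at hftc
  have := intervalIntegral.integral_of_le (show (0:ℝ) ≤ 1 by norm_num)
    (f := fun u => betaDens m j u - betaDens m (j+1) u) (μ := volume)
  rw [this, integral_Ioc_eq_integral_Ioo] at hftc
  have heq : ∫ u in Ioo (0:ℝ) 1, (betaDens m (j+1) u - betaDens m j u)
      = - ∫ u in Ioo (0:ℝ) 1, (betaDens m j u - betaDens m (j+1) u) := by
    rw [← integral_neg]
    congr 1 with u
    ring
  rw [heq, hftc]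
  ring


lemma muOS_succ_le {G : ℝ → ℝ} (hG : IsCDF G) (hGm : HasFiniteMean G) {m j : ℕ}
    (hj1 : 1 ≤ j) (hjm : j < m) : muOS m j G ≤ muOS m (j+1) G := by
  have hm0 : (0:ℝ) < m := by exact_mod_cast (by omega : 0 < m)
  have hj0 : (0:ℝ) < j := by exact_mod_cast hj1
  set c : ℝ := (j:ℝ)/m with hcdef
  have hc0 : 0 < c := div_pos hj0 hm0
  have hc1 : c < 1 := (div_lt_one hm0).2 (by exact_mod_cast hjm)
  have key : ∀ u ∈ Ioo (0:ℝ) 1,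
      quantile G c * (betaDens m (j+1) u - betaDens m j u)
        ≤ quantile G u * (betaDens m (j+1) u - betaDens m j u) := by
    intro u hu
    have hu0 := hu.1
    have hu1 := hu.2
    have hfac : (0:ℝ) ≤ (m.choose j : ℝ) * u ^ (j-1) * (1-u) ^ (m-j-1) :=
      mul_nonneg (mul_nonneg (by positivity) (pow_nonneg hu0.le _))
        (pow_nonneg (by linarith) _)
    rw [betaDens_diff_eq m j hj1 hjm u]
    rcases le_total u c with h | h
    · have hmu : (m:ℝ) * u - j ≤ 0 := by
        have : (m:ℝ) * u ≤ (m:ℝ) * c := by nlinarith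
        have : (m:ℝ) * c = j := by rw [hcdef]; field_simp
        nlinarith
      have hψ : (m.choose j : ℝ) * u ^ (j-1) * (1-u) ^ (m-j-1) * ((m:ℝ)*u - j) ≤ 0 :=
        mul_nonpos_of_nonneg_of_nonpos hfac hmu
      exact mul_le_mul_of_nonpos_right (quantile_mono hG hu0 h hc1) hψ
    · have hmu : (0:ℝ) ≤ (m:ℝ) * u - j := by
        have : (m:ℝ) * c ≤ (m:ℝ) * u := by nlinarith
        have : (m:ℝ) * c = j := by rw [hcdef]; field_simp
        nlinarith
      have hψ : (0:ℝ) ≤ (m.choose j : ℝ) * u ^ (j-1) * (1-u) ^ (m-j-1) * ((m:ℝ)*u - j) :=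
        mul_nonneg hfac hmu
      exact mul_le_mul_of_nonneg_right (quantile_mono hG hc0 h hu1) hψ
  have hint1 : IntegrableOn
      (fun u => quantile G c * (betaDens m (j+1) u - betaDens m j u)) (Ioo (0:ℝ) 1) :=
    ((integrableOn_betaDens m (j+1)).sub (integrableOn_betaDens m j)).const_mul _
  have hint2 : IntegrableOn
      (fun u => quantile G u * (betaDens m (j+1) u - betaDens m j u)) (Ioo (0:ℝ) 1) := by
    have h := (integrableOn_quantile_betaDens hGm m (j+1)).sub
      (integrableOn_quantile_betaDens hGm m j)
    exact h.congr (ae_of_all _ fun u => by simp only [Pi.sub_apply]; ring)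
  have hmono := setIntegral_mono_on hint1 hint2 measurableSet_Ioo key
  have e1 : (∫ u in Ioo (0:ℝ) 1, quantile G u * (betaDens m (j+1) u - betaDens m j u))
      = muOS m (j+1) G - muOS m j G := by
    unfold muOS
    rw [← integral_sub (integrableOn_quantile_betaDens hGm m (j+1))
      (integrableOn_quantile_betaDens hGm m j)]
    exact integral_congr_ae (ae_of_all _ fun u => by ring)
  have e2 : (∫ u in Ioo (0:ℝ) 1, quantile G c * (betaDens m (j+1) u - betaDens m j u))
      = 0 := by
    rw [integral_const_mul, integral_betaDens_diff m j hj1 hjm, mul_zero]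
  rw [e1, e2] at hmono
  linarith

lemma muOS_mono {G : ℝ → ℝ} (hG : IsCDF G) (hGm : HasFiniteMean G) {m i k : ℕ}
    (hi : 1 ≤ i) (hik : i ≤ k) (hk : k ≤ m) : muOS m i G ≤ muOS m k G := by
  induction k, hik using Nat.le_induction with
  | base => exact le_refl _
  | succ n hn ih =>
    exact le_trans (ih (by omega)) (muOS_succ_le hG hGm (by omega) (by omega))

lemma hoeffCDF_eq_card (m : ℕ) (G : ℝ → ℝ) (x : ℝ) :
    hoeffCDF m G x
      = (m : ℝ)⁻¹ * (((Finset.Icc 1 m).filter (fun j => muOS m j G ≤ x)).card : ℝ) := by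
  unfold hoeffCDF
  congr 1
  rw [Finset.sum_boole]

lemma quantile_hoeffCDF {G : ℝ → ℝ} (hG : IsCDF G) (hGm : HasFiniteMean G) {m k : ℕ}
    (hk1 : 1 ≤ k) (hkm : k ≤ m) {u : ℝ}
    (hul : ((k:ℝ)-1)/m < u) (huu : u ≤ (k:ℝ)/m) :
    quantile (hoeffCDF m G) u = muOS m k G := by
  have hm0 : (0:ℝ) < m := by exact_mod_cast (by omega : 0 < m)
  have hset : {x | u ≤ hoeffCDF m G x} = Ici (muOS m k G) := by
    ext x
    simp only [mem_setOf_eq, mem_Ici]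
    set N := ((Finset.Icc 1 m).filter (fun j => muOS m j G ≤ x)).card with hN
    have hc1 : u ≤ hoeffCDF m G x ↔ (k:ℝ) ≤ (N:ℝ) := by
      rw [hoeffCDF_eq_card, ← hN]
      rw [le_inv_mul_iff₀ hm0]
      constructor
      · intro h
        have h1 : (k:ℝ) - 1 < (N:ℝ) := by
          calc (k:ℝ) - 1 < u * m := by
                rw [div_lt_iff₀ hm0] at hul; linarith
            _ ≤ N := by linarith [h]
        have : (k:ℕ) < N + 1 := by exact_mod_cast (by linarith : (k:ℝ) < (N:ℝ) + 1)
        exact_mod_cast (by omega : k ≤ N)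
      · intro h
        have h' : u * m ≤ (k:ℝ) := (le_div_iff₀ hm0).1 huu
        linarith
    have hc2 : (k:ℝ) ≤ (N:ℝ) ↔ muOS m k G ≤ x := by
      constructor
      · intro h
        by_contra hx
        push_neg at hx
        have hsub : (Finset.Icc 1 m).filter (fun j => muOS m j G ≤ x)
            ⊆ Finset.Icc 1 (k-1) := by
          intro j hj
          rw [Finset.mem_filter] at hj
          obtain ⟨hj1, hj2⟩ := hj
          rw [Finset.mem_Icc] at hj1 ⊢
          refine ⟨hj1.1, ?_⟩
          by_contra hjk
          push_neg at hjk
          have : muOS m k G ≤ muOS m j G :=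
            muOS_mono hG hGm hk1 (by omega) hj1.2
          linarith
        have hcard := Finset.card_le_card hsub
        rw [Nat.card_Icc] at hcard
        have : N ≤ k - 1 := by omega
        have : (N:ℝ) ≤ (k:ℝ) - 1 := by
          have hk' : ((k-1:ℕ):ℝ) = (k:ℝ) - 1 := by
            push_cast [Nat.cast_sub hk1]; ring
          rw [← hk']; exact_mod_cast this
        linarith
      · intro h
        have hsub : Finset.Icc 1 k ⊆ (Finset.Icc 1 m).filter (fun j => muOS m j G ≤ x) := by
          intro j hj
          rw [Finset.mem_Icc] at hj
          rw [Finset.mem_filter, Finset.mem_Icc]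
          exact ⟨⟨hj.1, le_trans hj.2 hkm⟩,
            le_trans (muOS_mono hG hGm hj.1 hj.2 hkm) h⟩
        have hcard := Finset.card_le_card hsub
        rw [Nat.card_Icc] at hcard
        exact_mod_cast (by omega : k ≤ N)
    rw [hc1, hc2]
  unfold quantile
  rw [hset, csInf_Ici]


lemma exists_interval (m : ℕ) (hm : 0 < m) {u : ℝ} (hu : u ∈ Ioo (0:ℝ) 1) :
    ∃ k, k ∈ Finset.Icc 1 m ∧ ((k:ℝ)-1)/m < u ∧ u ≤ (k:ℝ)/m := by
  have hm0 : (0:ℝ) < m := by exact_mod_cast hm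
  have hum0 : 0 < u * m := mul_pos hu.1 hm0
  have humm : u * m ≤ m := by nlinarith [hu.2]
  refine ⟨(⌈u * m⌉).toNat, ?_, ?_, ?_⟩
  · rw [Finset.mem_Icc]
    constructor
    · have : 0 < ⌈u * m⌉ := Int.ceil_pos.2 hum0
      omega
    · have : ⌈u * m⌉ ≤ (m:ℤ) := Int.ceil_le.2 (by exact_mod_cast humm)
      omega
  · have hcast : (((⌈u * m⌉).toNat : ℕ) : ℝ) = ((⌈u * m⌉ : ℤ) : ℝ) := by
      exact_mod_cast congrArg (Int.cast : ℤ → ℝ)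
        (Int.toNat_of_nonneg (le_of_lt (Int.ceil_pos.2 hum0)))
    rw [hcast, div_lt_iff₀ hm0]
    have := Int.ceil_lt_add_one (u * m)
    linarith
  · have hcast : (((⌈u * m⌉).toNat : ℕ) : ℝ) = ((⌈u * m⌉ : ℤ) : ℝ) := by
      exact_mod_cast congrArg (Int.cast : ℤ → ℝ)
        (Int.toNat_of_nonneg (le_of_lt (Int.ceil_pos.2 hum0)))
    rw [hcast, le_div_iff₀ hm0]
    exact Int.le_ceil (u * m)

lemma inter_ae_Ioc {a b : ℝ} (h0 : 0 ≤ a) (hb : b ≤ 1) :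
    (Ioc a b ∩ Ioo (0:ℝ) 1 : Set ℝ) =ᵐ[volume] (Ioc a b : Set ℝ) := by
  rw [ae_eq_set]
  constructor
  · have : (Ioc a b ∩ Ioo (0:ℝ) 1) \ Ioc a b = ∅ := by
      apply diff_eq_empty.2 inter_subset_left
    rw [this]; simp
  · refine measure_mono_null (fun y hy => ?_) (measure_singleton (1:ℝ))
    obtain ⟨hy1, hy2⟩ := hy
    simp only [mem_inter_iff, not_and] at hy2
    have := hy2 hy1
    rw [mem_Ioo, not_and_or, not_lt, not_lt] at this
    rcases this with h | h
    · linarith [hy1.1]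
    · have : y = 1 := le_antisymm (le_trans hy1.2 hb) h
      simp [this]

lemma step_integral {G : ℝ → ℝ} (hG : IsCDF G) (hGm : HasFiniteMean G) (m : ℕ) (hm : 0 < m)
    (w : ℝ → ℝ) (hw : Continuous w) :
    ∫ u in Ioo (0:ℝ) 1, quantile (hoeffCDF m G) u * w u
      = ∑ k ∈ Finset.Icc 1 m, muOS m k G * ∫ u in Ioc (((k:ℝ)-1)/m) ((k:ℝ)/m), w u := by
  have hm0 : (0:ℝ) < m := by exact_mod_cast hm
  have hstep : ∀ u ∈ Ioo (0:ℝ) 1, quantile (hoeffCDF m G) u * w u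
      = ∑ k ∈ Finset.Icc 1 m,
          (Ioc (((k:ℝ)-1)/m) ((k:ℝ)/m)).indicator (fun t => muOS m k G * w t) u := by
    intro u hu
    obtain ⟨k, hk, hl, hr⟩ := exists_interval m hm hu
    rw [Finset.sum_eq_single k]
    · have hmm : u ∈ Ioc (((k:ℝ)-1)/m) ((k:ℝ)/m) := ⟨hl, hr⟩
      rw [Set.indicator_of_mem hmm]
      rw [Finset.mem_Icc] at hk
      rw [quantile_hoeffCDF hG hGm hk.1 hk.2 hl hr]
    · intro b hb hbk
      apply indicator_of_notMem
      intro hmem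
      rw [Finset.mem_Icc] at hk hb
      rcases lt_or_gt_of_ne hbk with h | h
      · -- b < k : u ≤ b/m ≤ (k-1)/m < u
        have hbc : (b:ℝ) ≤ (k:ℝ) - 1 := by
          have : (b:ℝ) + 1 ≤ k := by exact_mod_cast (by omega : b + 1 ≤ k)
          linarith
        have : u ≤ ((k:ℝ)-1)/m :=
          le_trans hmem.2 (by apply div_le_div_of_nonneg_right ?_ ?_ <;> first | exact hbc | positivity | skip)
        linarith
      · have hbc : (k:ℝ) ≤ (b:ℝ) - 1 := by
          have : (k:ℝ) + 1 ≤ b := by exact_mod_cast (by omega : k + 1 ≤ b)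
          linarith
        have : u ≤ ((b:ℝ)-1)/m :=
          le_trans hr (by apply div_le_div_of_nonneg_right ?_ ?_ <;> first | exact hbc | positivity | skip)
        linarith [hmem.1]
    · intro hk'; exact absurd hk hk'
  rw [setIntegral_congr_fun measurableSet_Ioo hstep]
  have hint : ∀ k ∈ Finset.Icc 1 m, IntegrableOn
      ((Ioc (((k:ℝ)-1)/m) ((k:ℝ)/m)).indicator (fun t => muOS m k G * w t)) (Ioo (0:ℝ) 1) := by
    intro k _
    apply Integrable.integrableOn
    apply MeasureTheory.IntegrableOn.integrable_indicator ?_ measurableSet_Ioc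
    exact ((continuous_const.mul hw).integrableOn_Icc).mono_set Ioc_subset_Icc_self
  rw [integral_finset_sum _ hint]
  refine Finset.sum_congr rfl fun k hk => ?_
  rw [Finset.mem_Icc] at hk
  have h0 : (0:ℝ) ≤ ((k:ℝ)-1)/m := by
    apply div_nonneg ?_ (le_of_lt hm0)
    have : (1:ℝ) ≤ k := by exact_mod_cast hk.1
    linarith
  have h1 : (k:ℝ)/m ≤ 1 := by
    rw [div_le_one hm0]; exact_mod_cast hk.2
  rw [integral_indicator measurableSet_Ioc, Measure.restrict_restrict measurableSet_Ioc,
    setIntegral_congr_set (inter_ae_Ioc h0 h1), integral_const_mul]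

lemma integral_Ioc_one {a b : ℝ} (hab : a ≤ b) : (∫ _ in Ioc a b, (1:ℝ)) = b - a := by
  simp [Real.volume_Ioc, ENNReal.toReal_ofReal (by linarith : (0:ℝ) ≤ b - a), hab]

lemma integral_Ioc_lin {a b : ℝ} (hab : a ≤ b) :
    (∫ u in Ioc a b, (2*u - 1)) = (b^2 - b) - (a^2 - a) := by
  rw [← intervalIntegral.integral_of_le hab]
  have hd : ∀ u ∈ uIcc a b, HasDerivAt (fun t : ℝ => t^2 - t) (2*u - 1) u := by
    intro u _
    have h := ((hasDerivAt_pow 2 u).sub (hasDerivAt_id u))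
    exact h.congr_deriv (by norm_num)
  have hInt : IntervalIntegrable (fun u : ℝ => 2*u - 1) volume a b :=
    (by fun_prop : Continuous (fun u : ℝ => 2*u - 1)).intervalIntegrable a b
  rw [intervalIntegral.integral_eq_sub_of_hasDerivAt hd hInt]

lemma sum_muOS {G : ℝ → ℝ} (hGm : HasFiniteMean G) (m : ℕ) (hm : 0 < m) :
    ∑ k ∈ Finset.Icc 1 m, muOS m k G = (∫ u in Ioo (0:ℝ) 1, quantile G u) * m := by
  unfold muOS
  rw [← integral_finset_sum _ (fun k _ => integrableOn_quantile_betaDens hGm m k)]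
  rw [setIntegral_congr_fun measurableSet_Ioo
    (fun u _ => by rw [← Finset.mul_sum, sum_betaDens m hm u])]
  rw [integral_mul_const]

lemma sum_weighted_muOS {G : ℝ → ℝ} (hGm : HasFiniteMean G) (m : ℕ) (hm : 0 < m) :
    ∑ k ∈ Finset.Icc 1 m, (2*(k:ℝ) - 1 - m) * muOS m k G
      = (m:ℝ) * ((m:ℝ)-1) * lambda2 G := by
  unfold muOS lambda2
  have hint : ∀ k ∈ Finset.Icc 1 m, IntegrableOn
      (fun u => (2*(k:ℝ) - 1 - m) * (quantile G u * betaDens m k u)) (Ioo (0:ℝ) 1) :=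
    fun k _ => (integrableOn_quantile_betaDens hGm m k).const_mul _
  calc ∑ k ∈ Finset.Icc 1 m, (2*(k:ℝ) - 1 - m) * ∫ u in Ioo (0:ℝ) 1, quantile G u * betaDens m k u
      = ∑ k ∈ Finset.Icc 1 m, ∫ u in Ioo (0:ℝ) 1, (2*(k:ℝ) - 1 - m) * (quantile G u * betaDens m k u) := by
        refine Finset.sum_congr rfl fun k _ => ?_
        rw [integral_const_mul]
    _ = ∫ u in Ioo (0:ℝ) 1, ∑ k ∈ Finset.Icc 1 m, (2*(k:ℝ) - 1 - m) * (quantile G u * betaDens m k u) := by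
        rw [← integral_finset_sum _ hint]
    _ = ∫ u in Ioo (0:ℝ) 1, (m:ℝ) * ((m:ℝ)-1) * (quantile G u * (2*u - 1)) := by
        refine setIntegral_congr_fun measurableSet_Ioo (fun u _ => ?_)
        have h := sum_weighted_betaDens m hm u
        calc ∑ k ∈ Finset.Icc 1 m, (2*(k:ℝ) - 1 - m) * (quantile G u * betaDens m k u)
            = quantile G u * ∑ k ∈ Finset.Icc 1 m, (2*(k:ℝ) - 1 - m) * betaDens m k u := by
              rw [Finset.mul_sum]; exact Finset.sum_congr rfl fun k _ => by ring
          _ = (m:ℝ) * ((m:ℝ)-1) * (quantile G u * (2*u - 1)) := by rw [h]; ring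
    _ = (m:ℝ) * ((m:ℝ)-1) * ∫ u in Ioo (0:ℝ) 1, quantile G u * (2*u - 1) := by
        rw [integral_const_mul]

lemma hoeff_mean_eq {G : ℝ → ℝ} (hG : IsCDF G) (hGm : HasFiniteMean G) (m : ℕ) (hm : 0 < m) :
    (∫ u in Ioo (0:ℝ) 1, quantile (hoeffCDF m G) u) = ∫ u in Ioo (0:ℝ) 1, quantile G u := by
  have hm0 : (0:ℝ) < m := by exact_mod_cast hm
  have h := step_integral hG hGm m hm (fun _ => 1) continuous_const
  simp only [mul_one] at h
  rw [h]
  have : ∀ k ∈ Finset.Icc 1 m, muOS m k G * (∫ _ in Ioc (((k:ℝ)-1)/m) ((k:ℝ)/m), (1:ℝ))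
      = muOS m k G * (1/m) := by
    intro k hk
    rw [Finset.mem_Icc] at hk
    have h1 : ((k:ℝ)-1)/m ≤ (k:ℝ)/m := by
      apply (div_le_div_iff_of_pos_right hm0).2; linarith
    rw [integral_Ioc_one h1]
    congr 1
    field_simp
    ring
  rw [Finset.sum_congr rfl this, ← Finset.sum_mul, sum_muOS hGm m hm]
  field_simp

lemma hoeff_lambda2_eq {G : ℝ → ℝ} (hG : IsCDF G) (hGm : HasFiniteMean G) (m : ℕ) (hm : 0 < m) :
    lambda2 (hoeffCDF m G) = (((m:ℝ) - 1) / m) * lambda2 G := by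
  have hm0 : (0:ℝ) < m := by exact_mod_cast hm
  have h := step_integral hG hGm m hm (fun p => 2*p - 1) (by fun_prop)
  have hl : lambda2 (hoeffCDF m G) = ∫ u in Ioo (0:ℝ) 1, quantile (hoeffCDF m G) u * (2*u - 1) := rfl
  rw [hl, h]
  have hterm : ∀ k ∈ Finset.Icc 1 m,
      muOS m k G * (∫ u in Ioc (((k:ℝ)-1)/m) ((k:ℝ)/m), (2*u - 1))
        = (2*(k:ℝ) - 1 - m) * muOS m k G * (1/(m^2)) := by
    intro k hk
    rw [Finset.mem_Icc] at hk
    have h1 : ((k:ℝ)-1)/m ≤ (k:ℝ)/m := by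
      apply (div_le_div_iff_of_pos_right hm0).2; linarith
    rw [integral_Ioc_lin h1]
    field_simp
    ring
  rw [Finset.sum_congr rfl hterm, ← Finset.sum_mul, sum_weighted_muOS hGm m hm]
  field_simp

lemma ecdf_mono (n : ℕ) (x : ℕ → ℝ) : Monotone (ecdf n x) := by
  intro a b hab
  unfold ecdf
  refine mul_le_mul_of_nonneg_left (Finset.sum_le_sum fun i _ => ?_) (by positivity)
  by_cases h : x i ≤ a
  · rw [if_pos h, if_pos (h.trans hab)]
  · rw [if_neg h]
    split <;> norm_num

lemma ecdf_eventually_const (n : ℕ) (x : ℕ → ℝ) (t : ℝ) :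
    ∃ b, t < b ∧ ∀ s ∈ Ico t b, ecdf n x s = ecdf n x t := by
  classical
  set F := (Finset.range n).filter (fun i => t < x i) with hF
  set s : Finset ℝ := insert (t+1) (F.image x) with hs
  have hne : s.Nonempty := ⟨t+1, Finset.mem_insert_self _ _⟩
  refine ⟨s.min' hne, ?_, ?_⟩
  · rw [Finset.lt_min'_iff]
    intro y hy
    rw [hs, Finset.mem_insert] at hy
    rcases hy with h | h
    · rw [h]; linarith
    · obtain ⟨i, hi, rfl⟩ := Finset.mem_image.1 h
      exact (Finset.mem_filter.1 hi).2
  · intro s' hs'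
    unfold ecdf
    congr 1
    refine Finset.sum_congr rfl fun i hi => ?_
    by_cases h : x i ≤ t
    · rw [if_pos (h.trans hs'.1), if_pos h]
    · push_neg at h
      have hiF : i ∈ F := Finset.mem_filter.2 ⟨hi, h⟩
      have : s.min' hne ≤ x i :=
        Finset.min'_le _ _ (Finset.mem_insert_of_mem (Finset.mem_image_of_mem x hiF))
      rw [if_neg (by linarith [hs'.2] : ¬ x i ≤ s'), if_neg (not_le.2 h)]

lemma isCDF_ecdf (n : ℕ) (hn : 0 < n) (x : ℕ → ℝ) : IsCDF (ecdf n x) := by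
  classical
  have himg : ((Finset.range n).image x).Nonempty :=
    (Finset.nonempty_range_iff.2 (by omega)).image x
  constructor
  · exact ecdf_mono n x
  · intro t
    obtain ⟨b, htb, hconst⟩ := ecdf_eventually_const n x t
    have hmem : Ico t b ∈ nhdsWithin t (Ici t) := Ico_mem_nhdsGE htb
    have hev : (ecdf n x) =ᶠ[nhdsWithin t (Ici t)] (fun _ => ecdf n x t) := by
      filter_upwards [hmem] with s hsm using hconst s hsm
    exact (Filter.Tendsto.congr' hev.symm tendsto_const_nhds : _)
  · have hev : (ecdf n x) =ᶠ[atBot] (fun _ => (0:ℝ)) := by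
      rw [Filter.EventuallyEq, eventually_atBot]
      refine ⟨((Finset.range n).image x).min' himg - 1, fun t ht => ?_⟩
      unfold ecdf
      rw [Finset.sum_congr rfl (fun i hi => if_neg ?_), Finset.sum_const_zero, mul_zero]
      have : ((Finset.range n).image x).min' himg ≤ x i :=
        Finset.min'_le _ _ (Finset.mem_image_of_mem x hi)
      linarith
    exact Filter.Tendsto.congr' hev.symm tendsto_const_nhds
  · have hev : (ecdf n x) =ᶠ[atTop] (fun _ => (1:ℝ)) := by
      rw [Filter.EventuallyEq, eventually_atTop]
      refine ⟨((Finset.range n).image x).max' himg, fun t ht => ?_⟩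
      unfold ecdf
      rw [Finset.sum_congr rfl (fun i hi => if_pos (by
          have : x i ≤ ((Finset.range n).image x).max' himg :=
            Finset.le_max' _ _ (Finset.mem_image_of_mem x hi)
          linarith)), Finset.sum_const, Finset.card_range, nsmul_eq_mul, mul_one,
        inv_mul_cancel₀ (by exact_mod_cast hn.ne' : (n:ℝ) ≠ 0)]
    exact Filter.Tendsto.congr' hev.symm tendsto_const_nhds

lemma hasFiniteMean_ecdf (n : ℕ) (hn : 0 < n) (x : ℕ → ℝ) : HasFiniteMean (ecdf n x) := by
  classical
  have himg : ((Finset.range n).image x).Nonempty :=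
    (Finset.nonempty_range_iff.2 (by omega)).image x
  set lo := ((Finset.range n).image x).min' himg with hlo
  set hi := ((Finset.range n).image x).max' himg with hhi
  have hzero : ∀ t, t < lo → ecdf n x t = 0 := by
    intro t ht
    unfold ecdf
    rw [Finset.sum_congr rfl (fun i hi => if_neg (by
      have : lo ≤ x i := Finset.min'_le _ _ (Finset.mem_image_of_mem x hi)
      linarith)), Finset.sum_const_zero, mul_zero]
  have hone : ecdf n x hi = 1 := by
    unfold ecdf
    rw [Finset.sum_congr rfl (fun i hii => if_pos
        (Finset.le_max' _ _ (Finset.mem_image_of_mem x hii))),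
      Finset.sum_const, Finset.card_range, nsmul_eq_mul, mul_one,
      inv_mul_cancel₀ (by exact_mod_cast hn.ne' : (n:ℝ) ≠ 0)]
  have hbdd : ∀ p : ℝ, 0 < p → BddBelow {t | p ≤ ecdf n x t} := by
    intro p hp
    refine ⟨lo, fun t ht => ?_⟩
    by_contra hlt
    push_neg at hlt
    rw [mem_setOf_eq, hzero t hlt] at ht
    linarith
  have hne : ∀ p : ℝ, p ≤ 1 → {t | p ≤ ecdf n x t}.Nonempty := by
    intro p hp
    exact ⟨hi, by rw [mem_setOf_eq, hone]; exact hp⟩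
  have hlow : ∀ p : ℝ, 0 < p → p ≤ 1 → lo ≤ quantile (ecdf n x) p := by
    intro p hp hp1
    refine le_csInf (hne p hp1) (fun t ht => ?_)
    by_contra hlt
    push_neg at hlt
    rw [mem_setOf_eq, hzero t hlt] at ht
    linarith
  have hqmono : ∀ p q : ℝ, 0 < p → p ≤ q → q ≤ 1 →
      quantile (ecdf n x) p ≤ quantile (ecdf n x) q :=
    fun p q hp hpq hq1 =>
      csInf_le_csInf (hbdd p hp) (hne q hq1) (fun t ht => le_trans hpq ht)
  set g : ℝ → ℝ := fun p => if 0 < p then quantile (ecdf n x) (min p 1) else lo with hg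
  have hgmono : Monotone g := by
    intro p q hpq
    show (if 0 < p then quantile (ecdf n x) (min p 1) else lo)
      ≤ (if 0 < q then quantile (ecdf n x) (min q 1) else lo)
    by_cases hp : 0 < p
    · rw [if_pos hp, if_pos (lt_of_lt_of_le hp hpq)]
      exact hqmono _ _ (lt_min hp one_pos) (min_le_min hpq le_rfl) (min_le_right _ _)
    · rw [if_neg hp]
      by_cases hq : 0 < q
      · rw [if_pos hq]
        exact hlow _ (lt_min hq one_pos) (min_le_right _ _)
      · rw [if_neg hq]
  have hgint : IntegrableOn g (Ioo (0:ℝ) 1) :=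
    (MonotoneOn.integrableOn_isCompact isCompact_Icc
      (hgmono.monotoneOn (Icc 0 1))).mono_set Ioo_subset_Icc_self
  refine hgint.congr (?_ : g =ᵐ[volume.restrict (Ioo (0:ℝ) 1)] fun u => quantile (ecdf n x) u)
  rw [Filter.EventuallyEq, ae_restrict_iff' measurableSet_Ioo]
  refine ae_of_all _ fun p hp => ?_
  show (if 0 < p then quantile (ecdf n x) (min p 1) else lo) = quantile (ecdf n x) p
  rw [if_pos hp.1, min_eq_left hp.2.le]

/-- The Hoeffding transform preserves the mean and shrinks the L-scale (and the MAD)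
by the factor `(m−1)/m`; in particular this holds for the empirical Hoeffding CDF. -/
theorem hoeffCDF_mean_and_Lscale
    (m : ℕ) (hm : 0 < m) (G : ℝ → ℝ) (hG : IsCDF G) (hGmean : HasFiniteMean G) :
    ((∫ u in Ioo (0:ℝ) 1, quantile (hoeffCDF m G) u) = ∫ u in Ioo (0:ℝ) 1, quantile G u) ∧
    lambda2 (hoeffCDF m G) = (((m : ℝ) - 1) / m) * lambda2 G ∧
    2 * lambda2 (hoeffCDF m G) = (((m : ℝ) - 1) / m) * (2 * lambda2 G) ∧
    (∀ n : ℕ, 0 < n → ∀ x : ℕ → ℝ,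
      ((∫ u in Ioo (0:ℝ) 1, quantile (hoeffCDF m (ecdf n x)) u)
          = ∫ u in Ioo (0:ℝ) 1, quantile (ecdf n x) u) ∧
      2 * lambda2 (hoeffCDF m (ecdf n x))
          = (((m : ℝ) - 1) / m) * (2 * lambda2 (ecdf n x))) := by
  refine ⟨hoeff_mean_eq hG hGmean m hm, hoeff_lambda2_eq hG hGmean m hm, ?_, ?_⟩
  · rw [hoeff_lambda2_eq hG hGmean m hm]; ring
  · intro n hn y
    exact ⟨hoeff_mean_eq (isCDF_ecdf n hn y) (hasFiniteMean_ecdf n hn y) m hm,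
      by rw [hoeff_lambda2_eq (isCDF_ecdf n hn y) (hasFiniteMean_ecdf n hn y) m hm]; ring⟩
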